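/- Let n_0 = 2^t − 1 with t ≥ 2. There exists a Q_2-free spanning subgraph H of Q_{n_0} with at most 2^{n_0+1} edges, together with two disjoint sets C, D ⊆ {0,1}^{n_0} with |C| = 2^{n_0}/(n_0+1) and |D| = 3·2^{n_0}/(n_0+1), such that C and D are each independent dominating sets of H, and every edge of H is incident with C ∪ D. -/

import Mathlib

/-- The hypercube graph `Q_n` on vertex set `{0,1}^n`. -/
def Qc (n : ℕ) : SimpleGraph (Fin n → ZMod 2) :=
  SimpleGraph.fromRel (fun x y => hammingDist x y = 1)

/-- `f` is an (injective, edge-preserving) copy of the cube `Q_m` in the graph `G`. -/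
def IsCubeCopy (m : ℕ) {V : Type*} (G : SimpleGraph V) (f : (Fin m → ZMod 2) → V) : Prop :=
  Function.Injective f ∧ ∀ x y, (Qc m).Adj x y → G.Adj (f x) (f y)

/-- `G` contains a copy of the cube `Q_m`. -/
def ContainsCube (m : ℕ) {V : Type*} (G : SimpleGraph V) : Prop :=
  ∃ f, IsCubeCopy m G f

/-- `G` is `Q_m`-free. -/
def CubeFree (m : ℕ) {V : Type*} (G : SimpleGraph V) : Prop :=
  ¬ ContainsCube m G

/-- Adding the edge `e` to `G` creates a new copy of `Q_m`. -/
def NewCube (m : ℕ) {V : Type*} (G : SimpleGraph V) (e : Sym2 V) : Prop :=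
  ∃ f, IsCubeCopy m (G ⊔ SimpleGraph.fromEdgeSet {e}) f ∧ ¬ IsCubeCopy m G f

/-- `G` is `(Q_n, Q_m)`-semi-saturated. -/
def SemiSaturated (n m : ℕ) (G : SimpleGraph (Fin n → ZMod 2)) : Prop :=
  G ≤ Qc n ∧ ∀ e ∈ (Qc n).edgeSet, e ∉ G.edgeSet → NewCube m G e

/-- `G` is `(Q_n, Q_m)`-saturated. -/
def Saturated (n m : ℕ) (G : SimpleGraph (Fin n → ZMod 2)) : Prop :=
  G ≤ Qc n ∧ CubeFree m G ∧
    ∀ e ∈ (Qc n).edgeSet, e ∉ G.edgeSet → ContainsCube m (G ⊔ SimpleGraph.fromEdgeSet {e})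
namespace HCon

open Finset

variable (t : ℕ)

abbrev Wt := Fin t → ZMod 2
abbrev Vt := Fin (2 ^ t - 1) → ZMod 2

lemma zmod2_add_self (a : ZMod 2) : a + a = 0 := by revert a; decide

lemma vadd_self {k : ℕ} (x : Fin k → ZMod 2) : x + x = 0 :=
  funext fun i => by simpa using zmod2_add_self (x i)

lemma dist_single {k : ℕ} (x y : Fin k → ZMod 2) (i : Fin k) (hy : y = x + Pi.single i 1) :
    hammingDist x y = 1 := by
  have : (Finset.univ.filter fun j => x j ≠ y j) = {i} := by
    ext j
    simp only [Finset.mem_filter, Finset.mem_univ, true_and, Finset.mem_singleton, hy,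
      Pi.add_apply]
    constructor
    · intro hj
      by_contra hji
      simp [Pi.single_eq_of_ne hji] at hj
    · intro hj; subst hj; simp [Pi.single_eq_same]
  simpa [hammingDist] using congrArg Finset.card this

lemma single_ne_zero {k : ℕ} (i : Fin k) : (Pi.single i 1 : Fin k → ZMod 2) ≠ 0 := by
  intro h
  have := congrFun h i
  simp [Pi.single_eq_same] at this

lemma ne_add_single {k : ℕ} (x : Fin k → ZMod 2) (i : Fin k) : x ≠ x + Pi.single i 1 := by
  intro h
  exact single_ne_zero i (left_eq_add.mp h)

lemma single_inj {k : ℕ} (i j : Fin k)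
    (h : (Pi.single i 1 : Fin k → ZMod 2) = Pi.single j 1) : i = j := by
  by_contra hij
  have := congrFun h i
  simp [Pi.single_eq_same, Pi.single_eq_of_ne hij] at this

lemma card_ne : Fintype.card {w : Wt t // w ≠ 0} = 2 ^ t - 1 := by
  have h1 : Fintype.card {w : Wt t // w = 0} = 1 := Fintype.card_subtype_eq 0
  have h2 := Fintype.card_subtype_compl (p := fun w : Wt t => w = 0)
  simp only [h1] at h2
  have h3 : Fintype.card (Wt t) = 2 ^ t := by
    simp [Wt]
  rw [h2, h3]

noncomputable def hEq : Fin (2 ^ t - 1) ≃ {w : Wt t // w ≠ 0} :=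
  Fintype.equivOfCardEq (by rw [card_ne]; simp)

noncomputable def hv (i : Fin (2 ^ t - 1)) : Wt t := (hEq t i).1

lemma hv_ne (i : Fin (2 ^ t - 1)) : hv t i ≠ 0 := (hEq t i).2

lemma hv_inj : Function.Injective (hv t) := fun i j h => (hEq t).injective (Subtype.ext h)

lemma hv_surj (w : Wt t) (hw : w ≠ 0) : ∃ i, hv t i = w :=
  ⟨(hEq t).symm ⟨w, hw⟩, by simp [hv]⟩

noncomputable def sg (x : Vt t) : Wt t := ∑ i, x i • hv t i

lemma sg_zero : sg t 0 = 0 := by simp [sg]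

lemma sg_add (x y : Vt t) : sg t (x + y) = sg t x + sg t y := by
  simp [sg, add_smul, Finset.sum_add_distrib]

lemma sg_single (i : Fin (2 ^ t - 1)) : sg t (Pi.single i (1 : ZMod 2)) = hv t i := by
  unfold sg
  rw [Finset.sum_eq_single i]
  · simp [Pi.single_eq_same]
  · intro j _ hj
    simp [Pi.single_eq_of_ne hj]
  · simp

lemma sg_step (x : Vt t) (i : Fin (2 ^ t - 1)) :
    sg t (x + Pi.single i 1) = sg t x + hv t i := by
  rw [sg_add, sg_single]

variable (ht : 2 ≤ t)

def i0 : Fin t := ⟨0, by omega⟩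
def i1 : Fin t := ⟨1, by omega⟩

lemma i0_ne_i1 : i0 t ht ≠ i1 t ht := by simp [i0, i1, Fin.ext_iff]

def uu : Wt t := Pi.single (i0 t ht) 1
def vv : Wt t := Pi.single (i1 t ht) 1

lemma uu_ne_zero : uu t ht ≠ 0 := single_ne_zero _
lemma vv_ne_zero : vv t ht ≠ 0 := single_ne_zero _

lemma uu_ne_vv : uu t ht ≠ vv t ht := by
  intro h
  exact i0_ne_i1 t ht (single_inj _ _ h)

lemma uv_ne_zero : uu t ht + vv t ht ≠ 0 := by
  intro h
  have := congrFun h (i0 t ht)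
  simp [uu, vv, Pi.single_eq_same, Pi.single_eq_of_ne (i0_ne_i1 t ht)] at this

noncomputable def tgt (s : Wt t) : Wt t :=
  if s (i0 t ht) = s (i1 t ht) then uu t ht else vv t ht

def Kst : Set (Wt t) := {uu t ht, vv t ht, uu t ht + vv t ht}

lemma tgt_mem (s : Wt t) : tgt t ht s = uu t ht ∨ tgt t ht s = vv t ht := by
  unfold tgt; split <;> simp

lemma tgt_mem_K (s : Wt t) : tgt t ht s ∈ Kst t ht := by
  rcases tgt_mem t ht s with h | h <;> rw [h]
  · exact Set.mem_insert _ _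
  · exact Set.mem_insert_of_mem _ (Set.mem_insert _ _)

lemma zero_not_K : (0 : Wt t) ∉ Kst t ht := by
  intro h
  rcases h with h | h | h
  · exact uu_ne_zero t ht h.symm
  · exact vv_ne_zero t ht h.symm
  · exact uv_ne_zero t ht h.symm

lemma tgt_key (s : Wt t) : tgt t ht (s + tgt t ht s) ≠ tgt t ht s := by
  have hne := i0_ne_i1 t ht
  by_cases h : s (i0 t ht) = s (i1 t ht)
  · have hts : tgt t ht s = uu t ht := by rw [tgt, if_pos h]
    rw [hts]
    have h0 : (s + uu t ht) (i0 t ht) = s (i0 t ht) + 1 := by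
      simp [uu, Pi.single_eq_same]
    have h1 : (s + uu t ht) (i1 t ht) = s (i1 t ht) := by
      simp [uu, Pi.single_eq_of_ne (Ne.symm hne)]
    have : tgt t ht (s + uu t ht) = vv t ht := by
      rw [tgt, if_neg]
      rw [h0, h1, ← h]
      have hz : ∀ a : ZMod 2, a + 1 ≠ a := by decide
      exact hz _
    rw [this]
    exact Ne.symm (uu_ne_vv t ht)
  · have hts : tgt t ht s = vv t ht := by rw [tgt, if_neg h]
    rw [hts]
    have h0 : (s + vv t ht) (i0 t ht) = s (i0 t ht) := by
      simp [vv, Pi.single_eq_of_ne hne]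
    have h1 : (s + vv t ht) (i1 t ht) = s (i1 t ht) + 1 := by
      simp [vv, Pi.single_eq_same]
    have : tgt t ht (s + vv t ht) = uu t ht := by
      rw [tgt, if_pos]
      rw [h0, h1]
      have hz : ∀ a b : ZMod 2, a ≠ b → a = b + 1 := by decide
      exact hz _ _ h
    rw [this]
    exact uu_ne_vv t ht

/-- The relation defining our graph. -/
def R (x y : Vt t) : Prop :=
  (∃ i, y = x + Pi.single i 1) ∧
    (sg t y = 0 ∨ (sg t x ∉ Kst t ht ∧ sg t y = tgt t ht (sg t x)))

noncomputable def H : SimpleGraph (Vt t) := SimpleGraph.fromRel (R t ht)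

def Cs : Set (Vt t) := {x | sg t x = 0}
def Ds : Set (Vt t) := {x | sg t x ∈ Kst t ht}

lemma adj_iff (x y : Vt t) :
    (H t ht).Adj x y ↔ x ≠ y ∧ (R t ht x y ∨ R t ht y x) := by
  rw [H, SimpleGraph.fromRel_adj]

lemma H_le_Q : H t ht ≤ Qc (2 ^ t - 1) := by
  intro x y hxy
  rw [adj_iff] at hxy
  obtain ⟨hne, hR⟩ := hxy
  rw [Qc, SimpleGraph.fromRel_adj]
  refine ⟨hne, ?_⟩
  rcases hR with hR | hR
  · obtain ⟨i, hi⟩ := hR.1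
    exact Or.inl (dist_single x y i hi)
  · obtain ⟨i, hi⟩ := hR.1
    exact Or.inr (dist_single y x i hi)

lemma adj_diff {x y : Vt t} (h : (H t ht).Adj x y) : ∃ i, y = x + Pi.single i 1 := by
  rw [adj_iff] at h
  rcases h.2 with hR | hR
  · exact hR.1
  · obtain ⟨i, hi⟩ := hR.1
    exact ⟨i, by rw [hi, add_assoc, vadd_self, add_zero]⟩

def Pp (a b : Wt t) : Prop :=
  a = 0 ∨ b = 0 ∨ (a ∉ Kst t ht ∧ b = tgt t ht a) ∨ (b ∉ Kst t ht ∧ a = tgt t ht b)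

lemma edge_P {x y : Vt t} (h : (H t ht).Adj x y) : Pp t ht (sg t x) (sg t y) := by
  rw [adj_iff] at h
  rcases h.2 with hR | hR
  · rcases hR.2 with h0 | ⟨hk, he⟩
    · exact Or.inr (Or.inl h0)
    · exact Or.inr (Or.inr (Or.inl ⟨hk, he⟩))
  · rcases hR.2 with h0 | ⟨hk, he⟩
    · exact Or.inl h0
    · exact Or.inr (Or.inr (Or.inr ⟨hk, he⟩))

lemma zero_case (s2 s3 s4 : Wt t) (h2 : s2 ≠ 0) (h3 : s3 ≠ 0) (h4 : s4 ≠ 0)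
    (h24 : s2 ≠ s4) (hsum : s4 = s2 + s3)
    (p23 : Pp t ht s2 s3) (p34 : Pp t ht s3 s4) : False := by
  rcases p23 with h | h | ⟨hk, he⟩ | ⟨hk, he⟩
  · exact h2 h
  · exact h3 h
  · -- s2 ∉ K, s3 = tgt s2
    rcases p34 with h' | h' | ⟨hk', he'⟩ | ⟨hk', he'⟩
    · exact h3 h'
    · exact h4 h'
    · exact hk' (he ▸ tgt_mem_K t ht s2)
    · -- s4 ∉ K, s3 = tgt s4
      apply tgt_key t ht s2
      have hs4 : s4 = s2 + tgt t ht s2 := by rw [hsum, he]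
      rw [← hs4, ← he', he]
  · -- s3 ∉ K, s2 = tgt s3
    rcases p34 with h' | h' | ⟨hk', he'⟩ | ⟨hk', he'⟩
    · exact h3 h'
    · exact h4 h'
    · exact h24 (he.trans he'.symm)
    · exact hk (he' ▸ tgt_mem_K t ht s4)

lemma nonzero_case (s1 s2 s3 s4 : Wt t) (h1 : s1 ≠ 0) (h2 : s2 ≠ 0) (h3 : s3 ≠ 0)
    (h4 : s4 ≠ 0) (h13 : s1 ≠ s3) (h24 : s2 ≠ s4)
    (p12 : Pp t ht s1 s2) (p23 : Pp t ht s2 s3) (p41 : Pp t ht s4 s1) : False := by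
  rcases p12 with h | h | ⟨hk, he⟩ | ⟨hk, he⟩
  · exact h1 h
  · exact h2 h
  · -- s1 ∉ K, s2 = tgt s1
    rcases p41 with h' | h' | ⟨hk', he'⟩ | ⟨hk', he'⟩
    · exact h4 h'
    · exact h1 h'
    · exact hk (he' ▸ tgt_mem_K t ht s4)
    · exact h24 (he'.trans he.symm).symm
  · -- s2 ∉ K, s1 = tgt s2
    rcases p23 with h' | h' | ⟨hk', he'⟩ | ⟨hk', he'⟩
    · exact h2 h'
    · exact h3 h'
    · exact h13 (he'.trans he.symm).symm
    · exact hk (he' ▸ tgt_mem_K t ht s3)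

lemma abs4 (s1 s2 s3 s4 : Wt t) (h12 : s1 ≠ s2) (h13 : s1 ≠ s3) (h14 : s1 ≠ s4)
    (h23 : s2 ≠ s3) (h24 : s2 ≠ s4) (h34 : s3 ≠ s4)
    (hsum : s1 + s2 + s3 + s4 = 0)
    (p12 : Pp t ht s1 s2) (p23 : Pp t ht s2 s3) (p34 : Pp t ht s3 s4)
    (p41 : Pp t ht s4 s1) : False := by
  by_cases hz1 : s1 = 0
  · refine zero_case t ht s2 s3 s4 (fun h => h12 (hz1.trans h.symm)) (fun h => h13 (hz1.trans h.symm))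
      (fun h => h14 (hz1.trans h.symm)) h24 ?_ p23 p34
    have e2 := vadd_self s2
    have e3 := vadd_self s3
    rw [hz1] at hsum
    linear_combination hsum - e2 - e3
  by_cases hz2 : s2 = 0
  · refine zero_case t ht s3 s4 s1 (fun h => h23 (h ▸ hz2)) (fun h => h24 (h ▸ hz2))
      (fun h => h12 (hz2 ▸ h.symm ▸ rfl)) h13.symm ?_ p34 p41
    have e3 := vadd_self s3
    have e4 := vadd_self s4
    rw [hz2] at hsum
    linear_combination hsum - e3 - e4
  by_cases hz3 : s3 = 0
  · refine zero_case t ht s4 s1 s2 (fun h => h34 (h ▸ hz3)) hz1 hz2 h24.symm ?_ p41 p12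
    have e4 := vadd_self s4
    have e1 := vadd_self s1
    rw [hz3] at hsum
    linear_combination hsum - e4 - e1
  by_cases hz4 : s4 = 0
  · refine zero_case t ht s1 s2 s3 hz1 hz2 hz3 h13 ?_ p12 p23
    have e1 := vadd_self s1
    have e2 := vadd_self s2
    rw [hz4] at hsum
    linear_combination hsum - e1 - e2
  exact nonzero_case t ht s1 s2 s3 s4 hz1 hz2 hz3 hz4 h13 h24 p12 p23 p41

lemma qc2_adj (x y : Fin 2 → ZMod 2) (hne : x ≠ y) (hd : hammingDist x y = 1) :
    (Qc 2).Adj x y := by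
  rw [Qc, SimpleGraph.fromRel_adj]; exact ⟨hne, Or.inl hd⟩

lemma cubefree : ¬ ∃ f : (Fin 2 → ZMod 2) → Vt t, Function.Injective f ∧
    ∀ x y, (Qc 2).Adj x y → (H t ht).Adj (f x) (f y) := by
  rintro ⟨f, finj, fadj⟩
  have a01 : (Qc 2).Adj ![0,0] ![1,0] := qc2_adj _ _ (by decide) (by decide)
  have a12 : (Qc 2).Adj ![1,0] ![1,1] := qc2_adj _ _ (by decide) (by decide)
  have a23 : (Qc 2).Adj ![1,1] ![0,1] := qc2_adj _ _ (by decide) (by decide)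
  have a30 : (Qc 2).Adj ![0,1] ![0,0] := qc2_adj _ _ (by decide) (by decide)
  obtain ⟨p, hp⟩ := adj_diff t ht (fadj _ _ a01)
  obtain ⟨q, hq⟩ := adj_diff t ht (fadj _ _ a12)
  obtain ⟨r, hr⟩ := adj_diff t ht (fadj _ _ a23)
  obtain ⟨s, hs⟩ := adj_diff t ht (fadj _ _ a30)
  have nac : f ![0,0] ≠ f ![1,1] := fun h => absurd (finj h) (by decide)
  have nbd : f ![1,0] ≠ f ![0,1] := fun h => absurd (finj h) (by decide)
  have hpq : p ≠ q := by
    intro h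
    apply nac
    rw [hq, hp, h, add_assoc, vadd_self, add_zero]
  have hE : Pi.single p 1 + Pi.single q 1 + Pi.single r 1 + Pi.single s 1 = (0 : Vt t) := by
    have hchain : f ![0,0] = f ![0,0] +
        (Pi.single p 1 + Pi.single q 1 + Pi.single r 1 + Pi.single s 1) := by
      conv_lhs => rw [hs, hr, hq, hp]
      ring
    exact left_eq_add.mp hchain
  have hrq : r ≠ q := by
    intro h
    apply nbd
    rw [hr, hq, h, add_assoc, vadd_self, add_zero]
  have hrp : r = p := by
    by_contra hrp
    have hev := congrFun hE r
    simp only [Pi.add_apply, Pi.single_eq_same, Pi.zero_apply,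
      Pi.single_eq_of_ne hrp, Pi.single_eq_of_ne hrq] at hev
    -- hev : 0 + 0 + 1 + Pi.single s 1 r = 0
    have hsr : s = r := by
      by_contra hsr
      rw [Pi.single_eq_of_ne (Ne.symm hsr)] at hev
      simp at hev
    rw [hsr] at hE
    have h1 : (Pi.single p 1 : Vt t) + Pi.single q 1 = 0 := by
      linear_combination hE - vadd_self (Pi.single r (1 : ZMod 2) : Vt t)
    have h2 : (Pi.single p (1 : ZMod 2) : Vt t) = Pi.single q 1 := by
      linear_combination h1 - vadd_self (Pi.single q (1 : ZMod 2) : Vt t)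
    exact hpq (single_inj _ _ h2)
  rw [hrp] at hr
  have hsq : s = q := by
    rw [hrp] at hE
    have h1 : (Pi.single q 1 : Vt t) + Pi.single s 1 = 0 := by
      linear_combination hE - vadd_self (Pi.single p (1 : ZMod 2) : Vt t)
    have h2 : (Pi.single s (1 : ZMod 2) : Vt t) = Pi.single q 1 := by
      linear_combination h1 - vadd_self (Pi.single q (1 : ZMod 2) : Vt t)
    exact single_inj _ _ h2
  -- sigma values
  have hb : sg t (f ![1,0]) = sg t (f ![0,0]) + hv t p := by rw [hp, sg_step]
  have hc2 : sg t (f ![1,1]) = sg t (f ![1,0]) + hv t q := by rw [hq, sg_step]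
  have hd2 : sg t (f ![0,1]) = sg t (f ![1,1]) + hv t p := by rw [hr, sg_step]
  have hcσ : sg t (f ![1,1]) = sg t (f ![0,0]) + (hv t p + hv t q) := by
    rw [hc2, hb]; ring
  have hdσ : sg t (f ![0,1]) = sg t (f ![0,0]) + hv t q := by
    rw [hd2, hcσ]
    linear_combination vadd_self (hv t p)
  have hvp0 := hv_ne t p
  have hvq0 := hv_ne t q
  have hpq_ne : hv t p + hv t q ≠ 0 := by
    intro h
    apply hpq
    apply hv_inj
    linear_combination h - vadd_self (hv t q)
  have h12 : sg t (f ![0,0]) ≠ sg t (f ![1,0]) := by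
    rw [hb]; intro h; exact hvp0 (left_eq_add.mp h)
  have h13 : sg t (f ![0,0]) ≠ sg t (f ![1,1]) := by
    rw [hcσ]; intro h; exact hpq_ne (left_eq_add.mp h)
  have h14 : sg t (f ![0,0]) ≠ sg t (f ![0,1]) := by
    rw [hdσ]; intro h; exact hvq0 (left_eq_add.mp h)
  have h23 : sg t (f ![1,0]) ≠ sg t (f ![1,1]) := by
    rw [hc2]; intro h; exact hvq0 (left_eq_add.mp h)
  have h24 : sg t (f ![1,0]) ≠ sg t (f ![0,1]) := by
    rw [hb, hdσ]; intro h
    exact hpq (hv_inj t (add_left_cancel h))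
  have h34 : sg t (f ![1,1]) ≠ sg t (f ![0,1]) := by
    rw [hd2]; intro h; exact hvp0 (left_eq_add.mp h)
  have hsum : sg t (f ![0,0]) + sg t (f ![1,0]) + sg t (f ![1,1]) + sg t (f ![0,1]) = 0 := by
    rw [hb, hcσ, hdσ]
    linear_combination 2 * vadd_self (sg t (f ![0,0])) + vadd_self (hv t p) + vadd_self (hv t q)
  exact abs4 t ht _ _ _ _ h12 h13 h14 h23 h24 h34 hsum
    (edge_P t ht (fadj _ _ a01)) (edge_P t ht (fadj _ _ a12))
    (edge_P t ht (fadj _ _ a23)) (edge_P t ht (fadj _ _ a30))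

lemma sg_surj (w : Wt t) : ∃ x : Vt t, sg t x = w := by
  by_cases hw : w = 0
  · exact ⟨0, by rw [sg_zero, hw]⟩
  · obtain ⟨i, hi⟩ := hv_surj t w hw
    exact ⟨Pi.single i 1, by rw [sg_single, hi]⟩

lemma fiber_card (w : Wt t) :
    (Finset.univ.filter fun x : Vt t => sg t x = w).card
      = (Finset.univ.filter fun x : Vt t => sg t x = 0).card := by
  obtain ⟨x0, hx0⟩ := sg_surj t w
  refine Finset.card_bij (fun x _ => x + x0) ?_ ?_ ?_
  · intro a ha
    simp only [Finset.mem_filter, Finset.mem_univ, true_and] at ha ⊢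
    rw [sg_add, ha, hx0, vadd_self]
  · intro a _ b _ hab
    exact add_right_cancel hab
  · intro y hy
    simp only [Finset.mem_filter, Finset.mem_univ, true_and] at hy
    refine ⟨y + x0, ?_, by show y + x0 + x0 = y; rw [add_assoc, vadd_self, add_zero]⟩
    simp only [Finset.mem_filter, Finset.mem_univ, true_and]
    rw [sg_add, hy, hx0, zero_add]

lemma card_Vt : Fintype.card (Vt t) = 2 ^ (2 ^ t - 1) := by simp

lemma card_fiber0_mul :
    (Finset.univ.filter fun x : Vt t => sg t x = 0).card * 2 ^ t = 2 ^ (2 ^ t - 1) := by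
  have h := Finset.card_eq_sum_card_fiberwise
    (f := sg t) (s := (Finset.univ : Finset (Vt t))) (t := (Finset.univ : Finset (Wt t)))
    (fun x _ => Finset.mem_univ _)
  have h2 : ∀ w ∈ (Finset.univ : Finset (Wt t)),
      (Finset.univ.filter fun x : Vt t => sg t x = w).card
        = (Finset.univ.filter fun x : Vt t => sg t x = 0).card :=
    fun w _ => fiber_card t w
  rw [Finset.sum_congr rfl h2, Finset.sum_const, smul_eq_mul] at h
  simp only [Finset.card_univ] at h
  have hW : Fintype.card (Wt t) = 2 ^ t := by simp
  rw [hW, card_Vt] at h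
  rw [mul_comm]
  exact h.symm

lemma t_le : t ≤ 2 ^ t - 1 := by
  have := Nat.lt_two_pow_self (n := t)
  omega

lemma fiber0_card :
    (Finset.univ.filter fun x : Vt t => sg t x = 0).card = 2 ^ (2 ^ t - 1 - t) := by
  have key := card_fiber0_mul t
  have ht' := t_le t
  have hp : (2:ℕ) ^ (2 ^ t - 1 - t) * 2 ^ t = 2 ^ (2 ^ t - 1) := by
    rw [← pow_add]
    congr 1
    omega
  exact Nat.eq_of_mul_eq_mul_right (Nat.two_pow_pos t) (key.trans hp.symm)

lemma Cs_ncard : (Cs t).ncard = 2 ^ (2 ^ t - 1 - t) := by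
  classical
  rw [Set.ncard_eq_toFinset_card (Cs t) (Set.toFinite _)]
  have hC : (Set.toFinite (Cs t)).toFinset = Finset.univ.filter fun x : Vt t => sg t x = 0 := by
    ext x; simp [Set.Finite.mem_toFinset, Cs]
  rw [hC, fiber0_card]

lemma uu_ne_uv : uu t ht ≠ uu t ht + vv t ht := by
  intro h
  exact vv_ne_zero t ht (left_eq_add.mp h)

lemma vv_ne_uv : vv t ht ≠ uu t ht + vv t ht := by
  intro h
  exact uu_ne_zero t ht (right_eq_add.mp h)

lemma Ds_ncard : (Ds t ht).ncard = 3 * 2 ^ (2 ^ t - 1 - t) := by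
  classical
  rw [Set.ncard_eq_toFinset_card (Ds t ht) (Set.toFinite _)]
  have hD : (Set.toFinite (Ds t ht)).toFinset = Finset.univ.filter
      (fun x : Vt t => sg t x = uu t ht ∨ sg t x = vv t ht ∨ sg t x = uu t ht + vv t ht) := by
    ext x; simp [Set.Finite.mem_toFinset, Ds, Kst]
  rw [hD, Finset.filter_or, Finset.filter_or,
    Finset.card_union_of_disjoint, Finset.card_union_of_disjoint]
  · rw [fiber_card t (uu t ht), fiber_card t (vv t ht), fiber_card t (uu t ht + vv t ht),
      fiber0_card]
    ring
  · rw [Finset.disjoint_left]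
    intro x hx hx'
    simp only [Finset.mem_filter, Finset.mem_univ, true_and] at hx hx'
    exact vv_ne_uv t ht (hx.symm.trans hx')
  · rw [Finset.disjoint_left]
    intro x hx hx'
    simp only [Finset.mem_filter, Finset.mem_univ, true_and, Finset.mem_union] at hx hx'
    rcases hx' with h' | h'
    · exact uu_ne_vv t ht (hx.symm.trans h')
    · exact uu_ne_uv t ht (hx.symm.trans h')

noncomputable def idx (w : Wt t) : Fin (2 ^ t - 1) :=
  if hw : w = 0 then ⟨0, by have h4 : 2 ^ 2 ≤ 2 ^ t := Nat.pow_le_pow_right (by norm_num) ht; omega⟩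
  else (hEq t).symm ⟨w, hw⟩

lemma hv_idx (w : Wt t) (hw : w ≠ 0) : hv t (idx t ht w) = w := by
  rw [idx, dif_neg hw]
  simp [hv]

noncomputable def gmap : Vt t × Bool → Sym2 (Vt t) := fun z =>
  if z.2 = true then s(z.1, z.1 + Pi.single (idx t ht (sg t z.1)) 1)
  else s(z.1, z.1 + Pi.single (idx t ht (sg t z.1 + tgt t ht (sg t z.1))) 1)

lemma tgt_add_ne (w : Wt t) (hk : w ∉ Kst t ht) : w + tgt t ht w ≠ 0 := by
  intro h
  have hw : w = tgt t ht w := by linear_combination h - vadd_self (tgt t ht w)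
  exact hk (hw ▸ tgt_mem_K t ht w)

lemma R_mem_range {x y : Vt t} (hR : R t ht x y) : s(x, y) ∈ Set.range (gmap t ht) := by
  obtain ⟨⟨i, hi⟩, hor⟩ := hR
  have hσ : sg t y = sg t x + hv t i := by rw [hi, sg_step]
  rcases hor with h0 | ⟨hk, he⟩
  · refine ⟨(x, true), ?_⟩
    have hx : sg t x = hv t i := by
      rw [h0] at hσ
      linear_combination -hσ - vadd_self (hv t i)
    have hii : idx t ht (sg t x) = i :=
      hv_inj t (by rw [hv_idx t ht _ (by rw [hx]; exact hv_ne t i), hx])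
    simp only [gmap, if_pos rfl]
    rw [hii, ← hi]
    simp
  · refine ⟨(x, false), ?_⟩
    have hw0 := tgt_add_ne t ht (sg t x) hk
    have hvi : hv t i = sg t x + tgt t ht (sg t x) := by
      rw [← he]
      linear_combination -hσ - vadd_self (sg t x)
    have hii : idx t ht (sg t x + tgt t ht (sg t x)) = i :=
      hv_inj t (by rw [hv_idx t ht _ hw0, hvi])
    simp only [gmap, Bool.false_eq_true, if_neg (by simp : ¬(false = true))]
    rw [hii, ← hi]
    simp

lemma edge_sub : (H t ht).edgeSet ⊆ Set.range (gmap t ht) := by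
  intro e he
  induction e using Sym2.ind with
  | _ x y =>
    rw [SimpleGraph.mem_edgeSet, adj_iff] at he
    rcases he.2 with hR | hR
    · exact R_mem_range t ht hR
    · rw [Sym2.eq_swap]
      exact R_mem_range t ht hR

lemma edge_count : (H t ht).edgeSet.ncard ≤ 2 ^ (2 ^ t - 1 + 1) := by
  classical
  have h1 : (H t ht).edgeSet.ncard ≤ (Set.range (gmap t ht)).ncard :=
    Set.ncard_le_ncard (edge_sub t ht) (Set.finite_range _)
  have h2 : (Set.range (gmap t ht)).ncard ≤ Fintype.card (Vt t × Bool) := by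
    rw [Set.ncard_eq_toFinset_card _ (Set.toFinite _)]
    have hsub : (Set.toFinite (Set.range (gmap t ht))).toFinset
        ⊆ Finset.univ.image (gmap t ht) := by
      intro e he
      rw [Set.Finite.mem_toFinset] at he
      obtain ⟨z, hz⟩ := he
      exact Finset.mem_image.mpr ⟨z, Finset.mem_univ _, hz⟩
    exact le_trans (Finset.card_le_card hsub)
      (le_trans Finset.card_image_le (le_of_eq Finset.card_univ))
  have h3 : Fintype.card (Vt t × Bool) = 2 ^ (2 ^ t - 1 + 1) := by
    rw [Fintype.card_prod, pow_succ]
    simp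
  exact h1.trans (h2.trans_eq h3)

lemma C_not_adj {x y : Vt t} (hx : x ∈ Cs t) (hy : y ∈ Cs t) : ¬ (H t ht).Adj x y := by
  intro h
  have key : ∀ a b : Vt t, R t ht a b → sg t a = 0 → sg t b = 0 → False := by
    rintro a b ⟨⟨i, hi⟩, -⟩ ha hb
    have hstep : sg t b = sg t a + hv t i := by rw [hi, sg_step]
    rw [ha, hb, zero_add] at hstep
    exact hv_ne t i hstep.symm
  rw [adj_iff] at h
  rcases h.2 with hR | hR
  · exact key _ _ hR hx hy
  · exact key _ _ hR hy hx

lemma D_not_adj {x y : Vt t} (hx : x ∈ Ds t ht) (hy : y ∈ Ds t ht) : ¬ (H t ht).Adj x y := by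
  intro h
  have key : ∀ a b : Vt t, R t ht a b → sg t a ∈ Kst t ht → sg t b ∈ Kst t ht → False := by
    rintro a b ⟨-, h0 | ⟨hk, -⟩⟩ ha hb
    · exact zero_not_K t ht (h0 ▸ hb)
    · exact hk ha
  rw [adj_iff] at h
  rcases h.2 with hR | hR
  · exact key _ _ hR hx hy
  · exact key _ _ hR hy hx

lemma C_dom (x : Vt t) (hx : x ∉ Cs t) : ∃ c ∈ Cs t, (H t ht).Adj x c := by
  have hσ : sg t x ≠ 0 := hx
  obtain ⟨i, hi⟩ := hv_surj t _ hσ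
  have hc : sg t (x + Pi.single i 1) = 0 := by
    rw [sg_step, hi]; exact vadd_self _
  refine ⟨x + Pi.single i 1, hc, ?_⟩
  rw [adj_iff]
  exact ⟨ne_add_single x i, Or.inl ⟨⟨i, rfl⟩, Or.inl hc⟩⟩

lemma D_dom (x : Vt t) (hx : x ∉ Ds t ht) : ∃ d ∈ Ds t ht, (H t ht).Adj x d := by
  have hk : sg t x ∉ Kst t ht := hx
  obtain ⟨i, hi⟩ := hv_surj t _ (tgt_add_ne t ht (sg t x) hk)
  have hσ : sg t (x + Pi.single i 1) = tgt t ht (sg t x) := by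
    rw [sg_step, hi]
    linear_combination vadd_self (sg t x)
  refine ⟨x + Pi.single i 1, ?_, ?_⟩
  · show sg t _ ∈ Kst t ht
    rw [hσ]
    exact tgt_mem_K t ht _
  · rw [adj_iff]
    exact ⟨ne_add_single x i, Or.inl ⟨⟨i, rfl⟩, Or.inr ⟨hk, hσ⟩⟩⟩

lemma incident (x y : Vt t) (h : (H t ht).Adj x y) :
    x ∈ Cs t ∪ Ds t ht ∨ y ∈ Cs t ∪ Ds t ht := by
  have key : ∀ a b : Vt t, R t ht a b → b ∈ Cs t ∪ Ds t ht := by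
    rintro a b ⟨-, h0 | ⟨-, he⟩⟩
    · exact Or.inl h0
    · exact Or.inr (show sg t b ∈ Kst t ht from he ▸ tgt_mem_K t ht (sg t a))
  rw [adj_iff] at h
  rcases h.2 with hR | hR
  · exact Or.inr (key _ _ hR)
  · exact Or.inl (key _ _ hR)

end HCon

/-- For `n₀ = 2^t − 1`, `t ≥ 2`: there is a `Q_2`-free (spanning) subgraph `H` of `Q_{n₀}`
with at most `2^{n₀+1}` edges, and disjoint sets `C, D` with `|C| = 2^{n₀}/(n₀+1)`,
`|D| = 3·2^{n₀}/(n₀+1)`, each an independent dominating set of `H`, such that every edge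
of `H` is incident with `C ∪ D`. -/
theorem stmt_16 (t : ℕ) (ht : 2 ≤ t) :
    ∃ (H : SimpleGraph (Fin (2 ^ t - 1) → ZMod 2))
      (C D : Set (Fin (2 ^ t - 1) → ZMod 2)),
      H ≤ Qc (2 ^ t - 1) ∧ CubeFree 2 H ∧
      H.edgeSet.ncard ≤ 2 ^ (2 ^ t - 1 + 1) ∧
      Disjoint C D ∧
      C.ncard = 2 ^ (2 ^ t - 1) / (2 ^ t - 1 + 1) ∧
      D.ncard = 3 * 2 ^ (2 ^ t - 1) / (2 ^ t - 1 + 1) ∧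
      (∀ x ∈ C, ∀ y ∈ C, ¬ H.Adj x y) ∧
      (∀ x ∈ D, ∀ y ∈ D, ¬ H.Adj x y) ∧
      (∀ x, x ∉ C → ∃ c ∈ C, H.Adj x c) ∧
      (∀ x, x ∉ D → ∃ d ∈ D, H.Adj x d) ∧
      (∀ x y, H.Adj x y → x ∈ C ∪ D ∨ y ∈ C ∪ D) := by
  have h1 : 2 ^ t - 1 + 1 = 2 ^ t := Nat.sub_add_cancel Nat.one_le_two_pow
  refine ⟨HCon.H t ht, HCon.Cs t, HCon.Ds t ht, HCon.H_le_Q t ht, ?_, HCon.edge_count t ht,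
    ?_, ?_, ?_, fun x hx y hy => HCon.C_not_adj t ht hx hy,
    fun x hx y hy => HCon.D_not_adj t ht hx hy, HCon.C_dom t ht, HCon.D_dom t ht,
    HCon.incident t ht⟩
  · rintro ⟨f, finj, fadj⟩
    exact HCon.cubefree t ht ⟨f, finj, fadj⟩
  · rw [Set.disjoint_left]
    intro x hx hxD
    have hx' : HCon.sg t x = 0 := hx
    have hxD' : HCon.sg t x ∈ HCon.Kst t ht := hxD
    rw [hx'] at hxD'
    exact HCon.zero_not_K t ht hxD'
  · rw [HCon.Cs_ncard t, h1, Nat.pow_div (HCon.t_le t) (by norm_num)]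
  · rw [HCon.Ds_ncard t ht, h1]
    have h2 : 3 * 2 ^ (2 ^ t - 1) = 3 * 2 ^ (2 ^ t - 1 - t) * 2 ^ t := by
      rw [mul_assoc, ← pow_add]
      congr 2
      have := HCon.t_le t
      omega
    rw [h2, Nat.mul_div_cancel _ (Nat.two_pow_pos t)]
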